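/- Let G = (A, B, E) be a bipartite graph, λ ≥ 2 an integer, and let S ⊆ E be produced by the following greedy procedure on any ordering of the edges: starting from S = ∅, upon seeing edge ab (a ∈ A, b ∈ B), add ab to S if deg_S(a) = 0 and deg_S(b) ≤ λ − 1. Then S satisfies deg_S(a) ≤ 1 for all a ∈ A and deg_S(b) ≤ λ for all b ∈ B, and the number of A-vertices covered by S satisfies |A(S)| ≥ (λ/(λ+1))·|M*|, where M* is a maximum matching of G. -/

import Mathlib

/-- A matching in a bipartite graph with edge set `E ⊆ α × β`: a set of edges of `E`,
no two of which share an endpoint. -/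
def IsBipMatching {α β : Type*} (E M : Finset (α × β)) : Prop :=
  M ⊆ E ∧ ∀ e ∈ M, ∀ f ∈ M, e ≠ f → e.1 ≠ f.1 ∧ e.2 ≠ f.2

/-- A maximum matching of the bipartite graph with edge set `E`. -/
def IsBipMaximumMatching {α β : Type*} (E M : Finset (α × β)) : Prop :=
  IsBipMatching E M ∧ ∀ N : Finset (α × β), IsBipMatching E N → N.card ≤ M.card

/-- One step of the greedy incomplete `λ`-bounded semi-matching procedure:
add edge `e = ab` if `deg_S(a) = 0` and `deg_S(b) ≤ λ - 1`. -/
def semiStep {α β : Type*} [DecidableEq α] [DecidableEq β] (lam : ℕ)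
    (S : Finset (α × β)) (e : α × β) : Finset (α × β) :=
  if (S.filter fun f => f.1 = e.1).card = 0 ∧
      (S.filter fun f => f.2 = e.2).card ≤ lam - 1 then
    insert e S
  else S

/-- The greedy incomplete `λ`-bounded semi-matching computed on the edge stream `π`. -/
def semiGreedy {α β : Type*} [DecidableEq α] [DecidableEq β] (lam : ℕ)
    (π : List (α × β)) : Finset (α × β) :=
  π.foldl (semiStep lam) ∅

section SemiGreedyAux

variable {α β : Type*} [DecidableEq α] [DecidableEq β]

lemma semiStep_subset (lam : ℕ) (S : Finset (α × β)) (e : α × β) :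
    S ⊆ semiStep lam S e := by
  unfold semiStep; split
  · exact Finset.subset_insert _ _
  · exact subset_rfl

lemma foldl_semiStep_subset (lam : ℕ) (l : List (α × β)) (S : Finset (α × β)) :
    S ⊆ l.foldl (semiStep lam) S := by
  induction l generalizing S with
  | nil => exact subset_rfl
  | cons g l ih => exact (semiStep_subset lam S g).trans (ih _)

lemma degA_semiStep (lam : ℕ) (S : Finset (α × β)) (e : α × β)
    (h : ∀ a : α, (S.filter fun f => f.1 = a).card ≤ 1) (a : α) :
    ((semiStep lam S e).filter fun f => f.1 = a).card ≤ 1 := by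
  unfold semiStep
  split
  · rename_i hc
    rw [Finset.filter_insert]
    split
    · rename_i ha
      have : (S.filter fun f => f.1 = a).card = 0 := ha ▸ hc.1
      calc (insert e (S.filter fun f => f.1 = a)).card
          ≤ (S.filter fun f => f.1 = a).card + 1 := Finset.card_insert_le _ _
        _ ≤ 1 := by omega
    · exact h a
  · exact h a

lemma degB_semiStep (lam : ℕ) (hlam : 1 ≤ lam) (S : Finset (α × β)) (e : α × β)
    (h : ∀ b : β, (S.filter fun f => f.2 = b).card ≤ lam) (b : β) :
    ((semiStep lam S e).filter fun f => f.2 = b).card ≤ lam := by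
  unfold semiStep
  split
  · rename_i hc
    rw [Finset.filter_insert]
    split
    · rename_i hb
      have h2 : (S.filter fun f => f.2 = b).card ≤ lam - 1 := hb ▸ hc.2
      calc (insert e (S.filter fun f => f.2 = b)).card
          ≤ (S.filter fun f => f.2 = b).card + 1 := Finset.card_insert_le _ _
        _ ≤ lam := by omega
    · exact h b
  · exact h b

lemma rejection (lam : ℕ) (hlam : 1 ≤ lam) (l : List (α × β)) (S : Finset (α × β))
    (e : α × β) (he : e ∈ l) :
    1 ≤ ((l.foldl (semiStep lam) S).filter fun f => f.1 = e.1).card ∨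
    lam ≤ ((l.foldl (semiStep lam) S).filter fun f => f.2 = e.2).card := by
  induction l generalizing S with
  | nil => cases he
  | cons g l ih =>
    rcases List.mem_cons.mp he with rfl | he'
    · by_cases h : (S.filter fun f => f.1 = e.1).card = 0 ∧
          (S.filter fun f => f.2 = e.2).card ≤ lam - 1
      · left
        have hmem : e ∈ semiStep lam S e := by
          unfold semiStep; rw [if_pos h]; exact Finset.mem_insert_self _ _
        have hfin : e ∈ l.foldl (semiStep lam) (semiStep lam S e) :=
          foldl_semiStep_subset lam l _ hmem
        exact Finset.card_pos.mpr ⟨e, Finset.mem_filter.mpr ⟨hfin, rfl⟩⟩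
      · have hsub : semiStep lam S e ⊆ l.foldl (semiStep lam) (semiStep lam S e) :=
          foldl_semiStep_subset lam l _
        have hS : S ⊆ l.foldl (semiStep lam) (semiStep lam S e) :=
          (semiStep_subset lam S e).trans hsub
        rw [not_and_or] at h
        rcases h with h | h
        · left
          calc 1 ≤ (S.filter fun f => f.1 = e.1).card := by omega
            _ ≤ _ := Finset.card_le_card (Finset.filter_subset_filter _ hS)
        · right
          push_neg at h
          calc lam ≤ (S.filter fun f => f.2 = e.2).card := by omega
            _ ≤ _ := Finset.card_le_card (Finset.filter_subset_filter _ hS)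
    · simp only [List.foldl_cons]
      exact ih _ he'

lemma degA_foldl (lam : ℕ) (l : List (α × β)) (S : Finset (α × β))
    (h : ∀ a : α, (S.filter fun f => f.1 = a).card ≤ 1) :
    ∀ a : α, ((l.foldl (semiStep lam) S).filter fun f => f.1 = a).card ≤ 1 := by
  induction l generalizing S with
  | nil => exact h
  | cons g l ih => exact ih _ (degA_semiStep lam S g h)

lemma degB_foldl (lam : ℕ) (hlam : 1 ≤ lam) (l : List (α × β)) (S : Finset (α × β))
    (h : ∀ b : β, (S.filter fun f => f.2 = b).card ≤ lam) :
    ∀ b : β, ((l.foldl (semiStep lam) S).filter fun f => f.2 = b).card ≤ lam := by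
  induction l generalizing S with
  | nil => exact h
  | cons g l ih => exact ih _ (degB_semiStep lam hlam S g h)

theorem semiGreedy_covers' {α β : Type*} [DecidableEq α] [DecidableEq β]
    (π : List (α × β)) (hnodup : π.Nodup) (lam : ℕ) (hlam : 2 ≤ lam)
    (Mstar : Finset (α × β)) (hMstar : IsBipMaximumMatching π.toFinset Mstar) :
    (∀ a : α, ((semiGreedy lam π).filter fun f => f.1 = a).card ≤ 1) ∧
    (∀ b : β, ((semiGreedy lam π).filter fun f => f.2 = b).card ≤ lam) ∧
    ((lam : ℝ) / ((lam : ℝ) + 1)) * (Mstar.card : ℝ) ≤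
      (((semiGreedy lam π).image Prod.fst).card : ℝ) := by
  obtain ⟨⟨hME, hMmatch⟩, -⟩ := hMstar
  set S := semiGreedy lam π with hSdef
  have h1 : ∀ a : α, (S.filter fun f => f.1 = a).card ≤ 1 :=
    degA_foldl lam π ∅ (by simp)
  have h2 : ∀ b : β, (S.filter fun f => f.2 = b).card ≤ lam :=
    degB_foldl lam (by omega) π ∅ (by simp)
  refine ⟨h1, h2, ?_⟩
  have hrej : ∀ e ∈ π, 1 ≤ (S.filter fun f => f.1 = e.1).card ∨
      lam ≤ (S.filter fun f => f.2 = e.2).card :=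
    fun e he => rejection lam (by omega) π ∅ e he
  set A := S.image Prod.fst with hAdef
  set U := Mstar.filter (fun e => ¬ e.1 ∈ A) with hUdef
  -- |S| = |A|
  have hSA : S.card = A.card := by
    refine (Finset.card_image_of_injOn ?_).symm
    intro f hf g hg hfg
    have hle := h1 f.1
    have hfmem : f ∈ S.filter fun x => x.1 = f.1 := Finset.mem_filter.mpr ⟨hf, rfl⟩
    have hgmem : g ∈ S.filter fun x => x.1 = f.1 := Finset.mem_filter.mpr ⟨hg, hfg.symm⟩
    exact Finset.card_le_one.mp hle f hfmem g hgmem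
  -- claim 1 : Mstar.card ≤ A.card + U.card
  have hclaim1 : Mstar.card ≤ A.card + U.card := by
    set C := Mstar.filter (fun e => e.1 ∈ A) with hCdef
    have hCinj : Set.InjOn Prod.fst (C : Set (α × β)) := by
      intro f hf g hg hfg
      simp only [Finset.mem_coe, hCdef, Finset.mem_filter] at hf hg
      by_contra hne
      exact (hMmatch f hf.1 g hg.1 hne).1 hfg
    have hCcard : C.card ≤ A.card := by
      rw [← Finset.card_image_of_injOn hCinj]
      refine Finset.card_le_card ?_
      intro a ha
      obtain ⟨e, he, rfl⟩ := Finset.mem_image.mp ha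
      exact (Finset.mem_filter.mp he).2
    have hsub : Mstar ⊆ C ∪ U := by
      intro e he
      by_cases h : e.1 ∈ A
      · exact Finset.mem_union_left _ (Finset.mem_filter.mpr ⟨he, h⟩)
      · exact Finset.mem_union_right _ (Finset.mem_filter.mpr ⟨he, h⟩)
    have := le_trans (Finset.card_le_card hsub) (Finset.card_union_le C U)
    omega
  -- claim 2 : lam * U.card ≤ S.card
  have hclaim2 : lam * U.card ≤ S.card := by
    have hUinj : Set.InjOn Prod.snd (U : Set (α × β)) := by
      intro f hf g hg hfg
      simp only [Finset.mem_coe, hUdef, Finset.mem_filter] at hf hg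
      by_contra hne
      exact (hMmatch f hf.1 g hg.1 hne).2 hfg
    have hdeg : ∀ b ∈ U.image Prod.snd, lam ≤ (S.filter fun f => f.2 = b).card := by
      intro b hb
      obtain ⟨e, he, rfl⟩ := Finset.mem_image.mp hb
      obtain ⟨heM, heA⟩ := Finset.mem_filter.mp he
      have heπ : e ∈ π := List.mem_toFinset.mp (hME heM)
      rcases hrej e heπ with h | h
      · exfalso
        obtain ⟨f, hf⟩ := Finset.card_pos.mp (by omega : 0 < (S.filter fun f => f.1 = e.1).card)
        obtain ⟨hfS, hf1⟩ := Finset.mem_filter.mp hf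
        exact heA (Finset.mem_image.mpr ⟨f, hfS, hf1⟩)
      · exact h
    have hdisj : (U.image Prod.snd : Set β).Pairwise
        (fun b b' => Disjoint (S.filter fun f => f.2 = b) (S.filter fun f => f.2 = b')) := by
      intro b hb b' hb' hne
      refine Finset.disjoint_left.mpr ?_
      intro f hf hf'
      exact hne ((Finset.mem_filter.mp hf).2.symm.trans (Finset.mem_filter.mp hf').2)
    have hbi : ((U.image Prod.snd).biUnion fun b => S.filter fun f => f.2 = b).card
        = ∑ b ∈ U.image Prod.snd, (S.filter fun f => f.2 = b).card :=
      Finset.card_biUnion (fun b hb b' hb' hne => hdisj hb hb' hne)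
    have hsum : ∑ b ∈ U.image Prod.snd, (S.filter fun f => f.2 = b).card ≤ S.card := by
      rw [← hbi]
      refine Finset.card_le_card ?_
      intro f hf
      obtain ⟨b, hb, hfm⟩ := Finset.mem_biUnion.mp hf
      exact (Finset.mem_filter.mp hfm).1
    calc lam * U.card = (U.image Prod.snd).card * lam := by
          rw [Finset.card_image_of_injOn hUinj, Nat.mul_comm]
      _ = (U.image Prod.snd).card • lam := (smul_eq_mul _ _).symm
      _ ≤ ∑ b ∈ U.image Prod.snd, (S.filter fun f => f.2 = b).card :=
          Finset.card_nsmul_le_sum _ _ _ hdeg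
      _ ≤ S.card := hsum
  -- combine
  have hnat : lam * Mstar.card ≤ (lam + 1) * A.card := by
    have h2' : lam * U.card ≤ A.card := hSA ▸ hclaim2
    calc lam * Mstar.card ≤ lam * (A.card + U.card) := Nat.mul_le_mul_left _ hclaim1
      _ = lam * A.card + lam * U.card := Nat.mul_add _ _ _
      _ ≤ lam * A.card + A.card := Nat.add_le_add_left h2' _
      _ = (lam + 1) * A.card := by ring
  rw [div_mul_eq_mul_div, div_le_iff₀ (by positivity)]
  have : ((lam * Mstar.card : ℕ) : ℝ) ≤ (((lam + 1) * A.card : ℕ) : ℝ) := by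
    exact_mod_cast hnat
  push_cast at this
  linarith

end SemiGreedyAux

/-- The greedy procedure (on any ordering `π` of the edges of a bipartite graph)
produces a set `S` with `deg_S(a) ≤ 1` for `a ∈ A`, `deg_S(b) ≤ λ` for `b ∈ B`, and
`|A(S)| ≥ (λ/(λ+1))·|M*|` for a maximum matching `M*`. -/
theorem semiGreedy_covers {α β : Type*} [DecidableEq α] [DecidableEq β]
    (π : List (α × β)) (hnodup : π.Nodup) (lam : ℕ) (hlam : 2 ≤ lam)
    (Mstar : Finset (α × β)) (hMstar : IsBipMaximumMatching π.toFinset Mstar) :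
    (∀ a : α, ((semiGreedy lam π).filter fun f => f.1 = a).card ≤ 1) ∧
    (∀ b : β, ((semiGreedy lam π).filter fun f => f.2 = b).card ≤ lam) ∧
    ((lam : ℝ) / ((lam : ℝ) + 1)) * (Mstar.card : ℝ) ≤
      (((semiGreedy lam π).image Prod.fst).card : ℝ) := by
  exact semiGreedy_covers' π hnodup lam hlam Mstar hMstar
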